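/- Unbiasedness of the bag-level estimator: let (x₁,y₁),…,(x_k,y_k) be i.i.d. samples from a distribution D on X × {0,1}, let p = E[y], α = (1/k)∑ᵢ yᵢ, and for f₁, f₂ : ℝ → ℝ and h : X → ℝ define ℓ_b = E_x[f₁(h(x)) + p·f₂(h(x))] + (α − p)·(∑ᵢ₌₁ᵏ f₂(h(xᵢ)) − k·E_x[f₂(h(x))]). Then E[ℓ_b] = E_{(x,y)}[f₁(h(x)) + y·f₂(h(x))]. -/

import Mathlib

open MeasureTheory

private lemma prod_pair_eq {k : ℕ} {i j : Fin k} (hij : i ≠ j) (a b : Fin k → ℝ) :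
    (∏ m, (if m = i then a m else if m = j then b m else 1)) = a i * b j := by
  have hj : j ∈ Finset.univ.erase i :=
    Finset.mem_erase.2 ⟨hij.symm, Finset.mem_univ j⟩
  rw [← Finset.mul_prod_erase _ _ (Finset.mem_univ i), if_pos rfl,
      ← Finset.mul_prod_erase _ _ hj, if_neg hij.symm, if_pos rfl]
  have h1 : ∏ m ∈ (Finset.univ.erase i).erase j,
      (if m = i then a m else if m = j then b m else 1) = 1 := by
    refine Finset.prod_eq_one fun m hm => ?_
    simp only [Finset.mem_erase] at hm
    rw [if_neg hm.2.1, if_neg hm.1]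
  rw [h1, mul_one]

private lemma pi_coord_integrable {X : Type*} [MeasurableSpace X]
    (μ : Measure (X × ℝ)) [IsProbabilityMeasure μ] {k : ℕ}
    {g : X × ℝ → ℝ} (hg : Integrable g μ) (i : Fin k) :
    Integrable (fun ω : Fin k → X × ℝ => g (ω i)) (Measure.pi fun _ => μ) := by
  letI : MeasureSpace (X × ℝ) := ⟨μ⟩
  haveI : SigmaFinite (volume : Measure (X × ℝ)) := inferInstanceAs (SigmaFinite μ)
  haveI : IsProbabilityMeasure (volume : Measure (X × ℝ)) :=
    inferInstanceAs (IsProbabilityMeasure μ)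
  have hF : ∀ m : Fin k,
      Integrable (fun z : X × ℝ => if m = i then g z else 1) volume := by
    intro m
    by_cases hm : m = i
    · have he : (fun z : X × ℝ => if m = i then g z else 1) = g := by
        funext z; rw [if_pos hm]
      rw [he]; exact hg
    · have he : (fun z : X × ℝ => if m = i then g z else 1) = fun _ => 1 := by
        funext z; rw [if_neg hm]
      rw [he]; exact integrable_const 1
  have h2 := Integrable.fintype_prod
    (f := fun m (z : X × ℝ) => if m = i then g z else 1) hF
  have h3 : (fun x : Fin k → X × ℝ =>
      ∏ m, (if m = i then g (x m) else 1)) = fun x => g (x i) := by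
    funext x
    simpa using Finset.prod_ite_eq' Finset.univ i (fun m => g (x m))
  rw [h3] at h2
  exact h2

private lemma pi_coord_integral {X : Type*} [MeasurableSpace X]
    (μ : Measure (X × ℝ)) [IsProbabilityMeasure μ] {k : ℕ}
    (g : X × ℝ → ℝ) (i : Fin k) :
    ∫ ω, g (ω i) ∂(Measure.pi fun _ : Fin k => μ) = ∫ z, g z ∂μ := by
  letI : MeasureSpace (X × ℝ) := ⟨μ⟩
  haveI : SigmaFinite (volume : Measure (X × ℝ)) := inferInstanceAs (SigmaFinite μ)
  haveI : IsProbabilityMeasure (volume : Measure (X × ℝ)) :=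
    inferInstanceAs (IsProbabilityMeasure μ)
  have h2 := integral_fintype_prod_eq_prod (𝕜 := ℝ) (ι := Fin k) (μ := fun _ => (volume : Measure (X × ℝ)))
    (f := fun m (z : X × ℝ) => if m = i then g z else 1)
  have h3 : (fun x : Fin k → X × ℝ =>
      ∏ m, (if m = i then g (x m) else 1)) = fun x => g (x i) := by
    funext x
    simpa using Finset.prod_ite_eq' Finset.univ i (fun m => g (x m))
  have h4 : ∀ m : Fin k,
      (∫ z, (if m = i then g z else 1) ∂(volume : Measure (X × ℝ)))
        = if m = i then ∫ z, g z ∂μ else 1 := by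
    intro m
    by_cases hm : m = i
    · simp only [if_pos hm]; rfl
    · simp only [if_neg hm]; simp
  have h5 : (∏ m : Fin k, ∫ z, (if m = i then g z else 1) ∂(volume : Measure (X × ℝ)))
      = ∫ z, g z ∂μ := by
    rw [Finset.prod_congr rfl fun m _ => h4 m]
    simpa using Finset.prod_ite_eq' Finset.univ i (fun _ => ∫ z, g z ∂μ)
  calc ∫ ω, g (ω i) ∂(Measure.pi fun _ : Fin k => μ)
      = ∫ x : Fin k → X × ℝ, ∏ m, (if m = i then g (x m) else 1) := by rw [h3]; rfl
    _ = ∏ m : Fin k, ∫ z, (if m = i then g z else 1) ∂(volume : Measure (X × ℝ)) := h2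
    _ = ∫ z, g z ∂μ := h5

private lemma pi_pair_integrable {X : Type*} [MeasurableSpace X]
    (μ : Measure (X × ℝ)) [IsProbabilityMeasure μ] {k : ℕ}
    {g₁ g₂ : X × ℝ → ℝ} (hg₁ : Integrable g₁ μ) (hg₂ : Integrable g₂ μ)
    {i j : Fin k} (hij : i ≠ j) :
    Integrable (fun ω : Fin k → X × ℝ => g₁ (ω i) * g₂ (ω j))
      (Measure.pi fun _ => μ) := by
  letI : MeasureSpace (X × ℝ) := ⟨μ⟩
  haveI : SigmaFinite (volume : Measure (X × ℝ)) := inferInstanceAs (SigmaFinite μ)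
  haveI : IsProbabilityMeasure (volume : Measure (X × ℝ)) :=
    inferInstanceAs (IsProbabilityMeasure μ)
  have hF : ∀ m : Fin k,
      Integrable (fun z : X × ℝ => if m = i then g₁ z else if m = j then g₂ z else 1)
        volume := by
    intro m
    by_cases hm : m = i
    · have he : (fun z : X × ℝ => if m = i then g₁ z else if m = j then g₂ z else 1)
          = g₁ := by funext z; rw [if_pos hm]
      rw [he]; exact hg₁
    · by_cases hm' : m = j
      · have he : (fun z : X × ℝ => if m = i then g₁ z else if m = j then g₂ z else 1)
            = g₂ := by funext z; rw [if_neg hm, if_pos hm']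
        rw [he]; exact hg₂
      · have he : (fun z : X × ℝ => if m = i then g₁ z else if m = j then g₂ z else 1)
            = fun _ => 1 := by funext z; rw [if_neg hm, if_neg hm']
        rw [he]; exact integrable_const 1
  have h2 := Integrable.fintype_prod
    (f := fun m (z : X × ℝ) => if m = i then g₁ z else if m = j then g₂ z else 1) hF
  have h3 : (fun x : Fin k → X × ℝ =>
      ∏ m, (if m = i then g₁ (x m) else if m = j then g₂ (x m) else 1))
      = fun x => g₁ (x i) * g₂ (x j) := by
    funext x
    exact prod_pair_eq hij (fun m => g₁ (x m)) (fun m => g₂ (x m))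
  rw [h3] at h2
  exact h2

private lemma pi_pair_integral {X : Type*} [MeasurableSpace X]
    (μ : Measure (X × ℝ)) [IsProbabilityMeasure μ] {k : ℕ}
    (g₁ g₂ : X × ℝ → ℝ) {i j : Fin k} (hij : i ≠ j) :
    ∫ ω, g₁ (ω i) * g₂ (ω j) ∂(Measure.pi fun _ : Fin k => μ)
      = (∫ z, g₁ z ∂μ) * ∫ z, g₂ z ∂μ := by
  letI : MeasureSpace (X × ℝ) := ⟨μ⟩
  haveI : SigmaFinite (volume : Measure (X × ℝ)) := inferInstanceAs (SigmaFinite μ)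
  haveI : IsProbabilityMeasure (volume : Measure (X × ℝ)) :=
    inferInstanceAs (IsProbabilityMeasure μ)
  have h2 := integral_fintype_prod_eq_prod (𝕜 := ℝ) (ι := Fin k) (μ := fun _ => (volume : Measure (X × ℝ)))
    (f := fun m (z : X × ℝ) => if m = i then g₁ z else if m = j then g₂ z else 1)
  have h3 : (fun x : Fin k → X × ℝ =>
      ∏ m, (if m = i then g₁ (x m) else if m = j then g₂ (x m) else 1))
      = fun x => g₁ (x i) * g₂ (x j) := by
    funext x
    exact prod_pair_eq hij (fun m => g₁ (x m)) (fun m => g₂ (x m))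
  have h4 : ∀ m : Fin k,
      (∫ z, (if m = i then g₁ z else if m = j then g₂ z else 1)
          ∂(volume : Measure (X × ℝ)))
        = if m = i then (∫ z, g₁ z ∂μ) else if m = j then (∫ z, g₂ z ∂μ) else 1 := by
    intro m
    by_cases hm : m = i
    · simp only [if_pos hm]; rfl
    · by_cases hm' : m = j
      · simp only [if_neg hm, if_pos hm']; rfl
      · simp only [if_neg hm, if_neg hm']; simp
  have h5 : (∏ m : Fin k, ∫ z, (if m = i then g₁ z else if m = j then g₂ z else 1)
        ∂(volume : Measure (X × ℝ)))
      = (∫ z, g₁ z ∂μ) * ∫ z, g₂ z ∂μ := by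
    rw [Finset.prod_congr rfl fun m _ => h4 m]
    exact prod_pair_eq hij _ _
  calc ∫ ω, g₁ (ω i) * g₂ (ω j) ∂(Measure.pi fun _ : Fin k => μ)
      = ∫ x : Fin k → X × ℝ,
          ∏ m, (if m = i then g₁ (x m) else if m = j then g₂ (x m) else 1) := by
        rw [h3]; rfl
    _ = _ := h2
    _ = _ := h5

/-- Unbiasedness of the bag-level estimator. -/
theorem bag_estimator_unbiased
    {X : Type*} [MeasurableSpace X]
    (μ : Measure (X × ℝ)) [IsProbabilityMeasure μ]
    (k : ℕ) (hk : 1 ≤ k)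
    (f₁ f₂ : ℝ → ℝ) (h : X → ℝ)
    (hy : ∀ᵐ z ∂μ, z.2 ∈ ({0, 1} : Set ℝ))
    (hf₁ : Integrable (fun z : X × ℝ => f₁ (h z.1)) μ)
    (hf₂ : MemLp (fun z : X × ℝ => f₂ (h z.1)) 2 μ)
    (p Ef1 Ef2 : ℝ)
    (hp : p = ∫ z, z.2 ∂μ)
    (hEf1 : Ef1 = ∫ z, f₁ (h z.1) ∂μ)
    (hEf2 : Ef2 = ∫ z, f₂ (h z.1) ∂μ) :
    ∫ ω, (Ef1 + p * Ef2
        + ((1 / (k : ℝ)) * ∑ i, (ω i).2 - p)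
          * ((∑ i, f₂ (h ((ω i).1))) - (k : ℝ) * Ef2))
      ∂(Measure.pi fun _ : Fin k => μ)
    = ∫ z, f₁ (h z.1) + z.2 * f₂ (h z.1) ∂μ := by
  have hk0 : (k : ℝ) ≠ 0 := Nat.cast_ne_zero.2 (by omega)
  set π := (Measure.pi fun _ : Fin k => μ) with hπ
  haveI : IsProbabilityMeasure π := by
    constructor
    rw [hπ, Measure.pi_univ]
    simp
  -- basic integrability facts on μ
  have hmb : AEStronglyMeasurable (fun z : X × ℝ => f₂ (h z.1)) μ := hf₂.1
  have hb : Integrable (fun z : X × ℝ => f₂ (h z.1)) μ := hf₂.integrable one_le_two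
  have hybd : ∀ᵐ z ∂μ, ‖z.2‖ ≤ 1 := by
    filter_upwards [hy] with z hz
    rcases hz with hz | hz
    · simp [hz]
    · rw [Set.mem_singleton_iff] at hz; simp [hz]
  have hsnd : Integrable (fun z : X × ℝ => z.2) μ :=
    Integrable.mono' (integrable_const 1) measurable_snd.aestronglyMeasurable hybd
  have hyb : Integrable (fun z : X × ℝ => z.2 * f₂ (h z.1)) μ := by
    refine Integrable.mono' hb.norm (measurable_snd.aestronglyMeasurable.mul hmb) ?_
    filter_upwards [hybd] with z hz
    rw [norm_mul]
    exact mul_le_of_le_one_left (norm_nonneg _) hz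
  set M := ∫ z, z.2 * f₂ (h z.1) ∂μ with hM
  -- rewrite the integrand
  have hfun : (fun ω : Fin k → X × ℝ => Ef1 + p * Ef2
        + ((1 / (k : ℝ)) * ∑ i, (ω i).2 - p)
          * ((∑ i, f₂ (h ((ω i).1))) - (k : ℝ) * Ef2))
      = fun ω => (Ef1 + p * Ef2 + p * k * Ef2)
          + (1 / (k : ℝ)) * (∑ i, ∑ j, (ω i).2 * f₂ (h ((ω j).1)))
          - Ef2 * (∑ i, (ω i).2)
          - p * (∑ j, f₂ (h ((ω j).1))) := by
    funext ω
    rw [← Finset.sum_mul_sum]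
    field_simp
    ring
  -- integrability on π
  have hTij : ∀ i j : Fin k,
      Integrable (fun ω : Fin k → X × ℝ => (ω i).2 * f₂ (h ((ω j).1))) π := by
    intro i j
    by_cases hij : i = j
    · subst hij
      exact pi_coord_integrable μ hyb i
    · exact pi_pair_integrable μ hsnd hb hij
  have hT : Integrable
      (fun ω : Fin k → X × ℝ => ∑ i, ∑ j, (ω i).2 * f₂ (h ((ω j).1))) π :=
    integrable_finset_sum _ fun i _ => integrable_finset_sum _ fun j _ => hTij i j
  have hS1 : Integrable (fun ω : Fin k → X × ℝ => ∑ i, (ω i).2) π :=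
    integrable_finset_sum _ fun i _ => pi_coord_integrable μ hsnd i
  have hS2 : Integrable (fun ω : Fin k → X × ℝ => ∑ j, f₂ (h ((ω j).1))) π :=
    integrable_finset_sum _ fun j _ => pi_coord_integrable μ hb j
  -- integrals on π
  have hIT : ∫ ω, (∑ i, ∑ j, (ω i).2 * f₂ (h ((ω j).1))) ∂π
      = (k : ℝ) * (M + ((k : ℝ) - 1) * (p * Ef2)) := by
    rw [integral_finset_sum _ fun i _ => integrable_finset_sum _ fun j _ => hTij i j]
    have hrowval : ∀ i : Fin k,
        ∫ ω, (∑ j, (ω i).2 * f₂ (h ((ω j).1))) ∂π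
          = M + ((k : ℝ) - 1) * (p * Ef2) := by
      intro i
      rw [integral_finset_sum _ fun j _ => hTij i j]
      have hterm : ∀ j : Fin k,
          ∫ ω, (ω i).2 * f₂ (h ((ω j).1)) ∂π
            = if i = j then M else p * Ef2 := by
        intro j
        by_cases hij : i = j
        · subst hij
          rw [if_pos rfl, hM]
          exact pi_coord_integral μ (fun z => z.2 * f₂ (h z.1)) i
        · rw [if_neg hij, hp, hEf2]
          exact pi_pair_integral μ (fun z => z.2) (fun z => f₂ (h z.1)) hij
      rw [Finset.sum_congr rfl fun j _ => hterm j]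
      have hsplit : ∀ j : Fin k, (if i = j then M else p * Ef2)
          = (if i = j then M - p * Ef2 else 0) + p * Ef2 := by
        intro j; split <;> ring
      rw [Finset.sum_congr rfl fun j _ => hsplit j, Finset.sum_add_distrib,
        Finset.sum_ite_eq, Finset.sum_const]
      simp only [Finset.mem_univ, if_true, Finset.card_univ, Fintype.card_fin,
        nsmul_eq_mul]
      ring
    rw [Finset.sum_congr rfl fun i _ => hrowval i, Finset.sum_const]
    simp only [Finset.card_univ, Fintype.card_fin, nsmul_eq_mul]
  have hIS1 : ∫ ω, (∑ i, (ω i).2) ∂π = (k : ℝ) * p := by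
    rw [integral_finset_sum _ fun i _ => pi_coord_integrable μ hsnd i]
    have : ∀ i : Fin k, ∫ ω, (ω i).2 ∂π = p := by
      intro i; rw [hp]; exact pi_coord_integral μ (fun z => z.2) i
    rw [Finset.sum_congr rfl fun i _ => this i, Finset.sum_const]
    simp [mul_comm]
  have hIS2 : ∫ ω, (∑ j, f₂ (h ((ω j).1))) ∂π = (k : ℝ) * Ef2 := by
    rw [integral_finset_sum _ fun j _ => pi_coord_integrable μ hb j]
    have : ∀ j : Fin k, ∫ ω, f₂ (h ((ω j).1)) ∂π = Ef2 := by
      intro j; rw [hEf2]; exact pi_coord_integral μ (fun z => f₂ (h z.1)) j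
    rw [Finset.sum_congr rfl fun j _ => this j, Finset.sum_const]
    simp [mul_comm]
  have hI0 : Integrable (fun _ : Fin k → X × ℝ => Ef1 + p * Ef2 + p * k * Ef2) π :=
    integrable_const _
  have hIA : Integrable (fun ω : Fin k → X × ℝ =>
      (Ef1 + p * Ef2 + p * k * Ef2)
        + (1 / (k : ℝ)) * (∑ i, ∑ j, (ω i).2 * f₂ (h ((ω j).1)))) π :=
    hI0.add (hT.const_mul _)
  have hIB : Integrable (fun ω : Fin k → X × ℝ =>
      (Ef1 + p * Ef2 + p * k * Ef2)
        + (1 / (k : ℝ)) * (∑ i, ∑ j, (ω i).2 * f₂ (h ((ω j).1)))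
        - Ef2 * (∑ i, (ω i).2)) π :=
    hIA.sub (hS1.const_mul _)
  rw [hfun]
  rw [integral_sub hIB (hS2.const_mul _),
    integral_sub hIA (hS1.const_mul _),
    integral_add hI0 (hT.const_mul _),
    integral_const_mul, integral_const_mul, integral_const_mul, integral_const,
    hIT, hIS1, hIS2, integral_add hf₁ hyb, ← hEf1, ← hM]
  simp only [measure_univ, ENNReal.toReal_one, probReal_univ, smul_eq_mul, one_mul]
  field_simp
  ring
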